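/- Fix θ > 0. Let S ∈ Sp(2d, ℝ) (i.e. Sᵀ J S = J with J = [[0, I_d],[−I_d, 0]]) and τ ∈ ℝ^{2d}, and let φ(z) = Sz + τ. Then φ is an internal symmetry of the star product: for all Schwartz functions f, g : ℝ^{2d} → ℂ, (f ⋆_θ g) ∘ φ = (f ∘ φ) ⋆_θ (g ∘ φ). -/

import Mathlib

open MeasureTheory Complex Real Matrix

/-- `B u v = ⟨x-part of u, w-part of v⟩` on `ℝ^{2d}`, where the `x`-variables are indexed
by `Sum.inl` and the `w`-variables by `Sum.inr`. -/
noncomputable def Bform (d : ℕ) (u v : (Fin d ⊕ Fin d) → ℝ) : ℝ :=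
  ∑ i : Fin d, u (Sum.inl i) * v (Sum.inr i)

/-- The star product `(f ⋆_θ g)(z)` on `ℝ^{2d} ≅ ℝ^d × ℝ^d`: with `z = (x,w)`,
`z₁ = (x₁,w₁)`, `z₂ = (x₂,w₂)`, the phase is
`⟨x₂−x, w₁⟩ + ⟨x−x₁, w₂⟩ + ⟨x₁−x₂, w⟩ = B(z₂−z, z₁) + B(z−z₁, z₂) + B(z₁−z₂, z)`. -/
noncomputable def sprod (d : ℕ) (θ : ℝ) (f g : ((Fin d ⊕ Fin d) → ℝ) → ℂ) :
    ((Fin d ⊕ Fin d) → ℝ) → ℂ := fun z =>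
  (((Real.pi * θ) ^ (-(2 * d : ℤ)) : ℝ) : ℂ) *
    ∫ p : ((Fin d ⊕ Fin d) → ℝ) × ((Fin d ⊕ Fin d) → ℝ),
      f p.1 * g p.2 * Complex.exp (2 * Complex.I / (θ : ℂ) *
        ((Bform d (p.2 - z) p.1 + Bform d (z - p.1) p.2 + Bform d (p.1 - p.2) z : ℝ) : ℂ))

/-- The standard symplectic matrix `J = [[0, I],[−I, 0]]`. -/
noncomputable def Jmat (d : ℕ) : Matrix (Fin d ⊕ Fin d) (Fin d ⊕ Fin d) ℝ :=
  Matrix.fromBlocks 0 1 (-1) 0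

/-- The symplectic form `ω(u,v) = B(u,v) − B(v,u)`. -/
noncomputable def om (d : ℕ) (u v : (Fin d ⊕ Fin d) → ℝ) : ℝ :=
  Bform d u v - Bform d v u

lemma om_eq (d : ℕ) (u v : (Fin d ⊕ Fin d) → ℝ) :
    om d u v = u ⬝ᵥ (Jmat d).mulVec v := by
  simp [om, Bform, Jmat, dotProduct, Matrix.mulVec, Fintype.sum_sum_type,
    Matrix.fromBlocks_apply₁₁, Matrix.fromBlocks_apply₁₂, Matrix.fromBlocks_apply₂₁,
    Matrix.fromBlocks_apply₂₂, Matrix.one_apply, Finset.mul_sum, mul_ite, mul_comm]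
  ring

lemma om_S (d : ℕ) (S : Matrix (Fin d ⊕ Fin d) (Fin d ⊕ Fin d) ℝ)
    (hS : Sᵀ * Jmat d * S = Jmat d) (u v : (Fin d ⊕ Fin d) → ℝ) :
    om d (S.mulVec u) (S.mulVec v) = om d u v := by
  rw [om_eq, om_eq, Matrix.mulVec_mulVec, Matrix.dotProduct_mulVec,
    ← Matrix.vecMul_transpose, Matrix.vecMul_vecMul, ← Matrix.mul_assoc, hS,
    ← Matrix.dotProduct_mulVec]

lemma Bform_sub_left (d : ℕ) (u v w : (Fin d ⊕ Fin d) → ℝ) :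
    Bform d (u - v) w = Bform d u w - Bform d v w := by
  simp [Bform, sub_mul, Finset.sum_sub_distrib]

lemma om_add_left (d : ℕ) (u v w : (Fin d ⊕ Fin d) → ℝ) :
    om d (u + v) w = om d u w + om d v w := by
  simp [om, Bform, add_mul, mul_add, Finset.sum_add_distrib]; ring

lemma om_add_right (d : ℕ) (u v w : (Fin d ⊕ Fin d) → ℝ) :
    om d u (v + w) = om d u v + om d u w := by
  simp [om, Bform, add_mul, mul_add, Finset.sum_add_distrib]; ring

lemma phase_eq_om (d : ℕ) (z z₁ z₂ : (Fin d ⊕ Fin d) → ℝ) :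
    Bform d (z₂ - z) z₁ + Bform d (z - z₁) z₂ + Bform d (z₁ - z₂) z =
      om d z₂ z₁ + om d z z₂ + om d z₁ z := by
  simp only [om, Bform_sub_left]
  ring_nf

lemma phase_invariant (d : ℕ) (S : Matrix (Fin d ⊕ Fin d) (Fin d ⊕ Fin d) ℝ)
    (hS : Sᵀ * Jmat d * S = Jmat d) (τ : (Fin d ⊕ Fin d) → ℝ)
    (z z₁ z₂ : (Fin d ⊕ Fin d) → ℝ) :
    Bform d ((S.mulVec z₂ + τ) - (S.mulVec z + τ)) (S.mulVec z₁ + τ) +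
      Bform d ((S.mulVec z + τ) - (S.mulVec z₁ + τ)) (S.mulVec z₂ + τ) +
      Bform d ((S.mulVec z₁ + τ) - (S.mulVec z₂ + τ)) (S.mulVec z + τ) =
    Bform d (z₂ - z) z₁ + Bform d (z - z₁) z₂ + Bform d (z₁ - z₂) z := by
  rw [phase_eq_om d (S.mulVec z + τ) (S.mulVec z₁ + τ) (S.mulVec z₂ + τ),
    phase_eq_om d z z₁ z₂]
  simp only [om_add_left, om_add_right, om_S d S hS]
  simp only [om]
  ring

lemma det_sq_one (d : ℕ) (S : Matrix (Fin d ⊕ Fin d) (Fin d ⊕ Fin d) ℝ)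
    (hS : Sᵀ * Jmat d * S = Jmat d) : S.det = 1 ∨ S.det = -1 := by
  have hJ2 : Jmat d * Jmat d = -1 := by
    have : (-1 : Matrix (Fin d ⊕ Fin d) (Fin d ⊕ Fin d) ℝ) =
        Matrix.fromBlocks (-1) 0 0 (-1) := by
      rw [← Matrix.fromBlocks_one]
      ext (i | i) (j | j) <;> simp [Matrix.one_apply, Sum.inl.injEq, Sum.inr.injEq]
    rw [this]
    simp [Jmat, Matrix.fromBlocks_multiply]
  have hdJ : (Jmat d).det ^ 2 = 1 := by
    have := congrArg Matrix.det hJ2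
    rw [Matrix.det_mul, Matrix.det_neg] at this
    simp only [Matrix.det_mul, Matrix.det_neg, Matrix.det_one, Fintype.card_sum,
      Fintype.card_fin, mul_one] at this
    rw [← two_mul, pow_mul] at this
    rw [sq]
    simpa using this
  have hJne : (Jmat d).det ≠ 0 := by
    intro h; rw [h] at hdJ; simp at hdJ
  have h2 : S.det * S.det = 1 := by
    have := congrArg Matrix.det hS
    rw [Matrix.det_mul, Matrix.det_mul, Matrix.det_transpose] at this
    have h3 : (S.det * S.det) * (Jmat d).det = 1 * (Jmat d).det := by
      rw [one_mul]; linear_combination this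
    exact mul_right_cancel₀ hJne h3
  exact mul_self_eq_one_iff.mp h2

theorem affine_symplectic_internal_symmetry (d : ℕ) (θ : ℝ) (hθ : 0 < θ)
    (S : Matrix (Fin d ⊕ Fin d) (Fin d ⊕ Fin d) ℝ) (hS : Sᵀ * Jmat d * S = Jmat d)
    (τ : (Fin d ⊕ Fin d) → ℝ)
    (f g : SchwartzMap ((Fin d ⊕ Fin d) → ℝ) ℂ) (z : (Fin d ⊕ Fin d) → ℝ) :
    sprod d θ f g (S.mulVec z + τ) =
      sprod d θ (fun y => f (S.mulVec y + τ)) (fun y => g (S.mulVec y + τ)) z := by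
  have hdet := det_sq_one d S hS
  have hdet0 : S.det ≠ 0 := by rcases hdet with h | h <;> rw [h] <;> norm_num
  have hcoe : (fun y : (Fin d ⊕ Fin d) → ℝ => S.mulVec y) = ⇑(Matrix.toLin' S) :=
    funext fun v => (Matrix.toLin'_apply S v).symm
  have mp1 : MeasurePreserving (fun y : (Fin d ⊕ Fin d) → ℝ => S.mulVec y) volume volume := by
    constructor
    · rw [hcoe]; exact (LinearMap.continuous_of_finiteDimensional _).measurable
    · rw [hcoe, Measure.map_linearMap_addHaar_eq_smul_addHaar volume
        (by rw [LinearMap.det_toLin']; exact hdet0), LinearMap.det_toLin']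
      rcases hdet with h | h <;> rw [h] <;> norm_num
  have mp : MeasurePreserving (fun y : (Fin d ⊕ Fin d) → ℝ => S.mulVec y + τ) volume volume := by
    have := (measurePreserving_add_right (volume : Measure ((Fin d ⊕ Fin d) → ℝ)) τ).comp mp1
    exact this
  haveI : Invertible S := S.invertibleOfIsUnitDet hdet0.isUnit
  let e : ((Fin d ⊕ Fin d) → ℝ) ≃ₗ[ℝ] ((Fin d ⊕ Fin d) → ℝ) := S.toLinearEquiv' ‹Invertible S›
  let hom : ((Fin d ⊕ Fin d) → ℝ) ≃ₜ ((Fin d ⊕ Fin d) → ℝ) :=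
    (e.toContinuousLinearEquiv.toHomeomorph).trans (Homeomorph.addRight τ)
  have hhom : ⇑hom = fun y : (Fin d ⊕ Fin d) → ℝ => S.mulVec y + τ := by
    funext y
    simp [hom, e, Matrix.toLinearEquiv', Matrix.toLin'_apply]
  have emb : MeasurableEmbedding (fun y : (Fin d ⊕ Fin d) → ℝ => S.mulVec y + τ) := by
    rw [← hhom]; exact hom.measurableEmbedding
  unfold sprod
  congr 1
  rw [Measure.volume_eq_prod]
  rw [← (mp.prod mp).integral_comp (emb.prodMap emb)
    (fun p : ((Fin d ⊕ Fin d) → ℝ) × ((Fin d ⊕ Fin d) → ℝ) =>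
      f p.1 * g p.2 * Complex.exp (2 * Complex.I / (θ : ℂ) *
        ((Bform d (p.2 - (S.mulVec z + τ)) p.1 + Bform d ((S.mulVec z + τ) - p.1) p.2 +
          Bform d (p.1 - p.2) (S.mulVec z + τ) : ℝ) : ℂ)))]
  apply integral_congr_ae
  filter_upwards with p
  simp only [Prod.map_fst, Prod.map_snd, Prod.map_apply]
  rw [phase_invariant d S hS τ z p.1 p.2]
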